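/- Let A⁺, A⁻ ∈ ℂ^{m×m} and suppose there exist α ∈ ℂ with α ≠ 0 and β ∈ ℝ such that every eigenvalue λ of A⁺ satisfies Re(αλ) > β and every eigenvalue μ of A⁻ satisfies Re(αμ) < β. Then for every B ∈ ℂ^{m×m} the function s ↦ exp(−sαA⁺) B exp(sαA⁻) is integrable on [0,∞), and the matrix X = α·∫₀^∞ exp(−sαA⁺) B exp(sαA⁻) ds solves the Sylvester equation A⁺X − XA⁻ = B. -/

import Mathlib

open NormedSpace MeasureTheory  -- `exp`
open scoped Nat Pointwise

attribute [local instance] Matrix.linftyOpNormedRing Matrix.linftyOpNormedAlgebra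
  Matrix.linftyOpNormedSpace

namespace SylvesterAux

variable {m : ℕ}

/-- Bound for `exp (s • M)` applied to a generalized eigenvector. -/
lemma vec_bound (M : Matrix (Fin m) (Fin m) ℂ) {lam : ℂ} {c : ℝ} (hlam : lam.re < c)
    (v : Fin m → ℂ) (k : ℕ)
    (hv : ((M - lam • 1) ^ k).mulVec v = 0) :
    ∃ C : ℝ, 0 ≤ C ∧ ∀ s : ℝ, 0 ≤ s →
      ‖(exp ((s : ℂ) • M)).mulVec v‖ ≤ C * Real.exp (c * s) := by
  classical
  set N : Matrix (Fin m) (Fin m) ℂ := M - lam • 1 with hN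
  set ε : ℝ := c - lam.re with hε
  have hε0 : 0 < ε := by simp only [hε]; linarith
  refine ⟨∑ n ∈ Finset.range k, ε⁻¹ ^ n * ‖(N ^ n).mulVec v‖, by positivity, ?_⟩
  intro s hs
  -- the linear map X ↦ X.mulVec v
  let L : Matrix (Fin m) (Fin m) ℂ →ₗ[ℂ] (Fin m → ℂ) :=
    { toFun := fun X => X.mulVec v
      map_add' := fun X Y => Matrix.add_mulVec X Y v
      map_smul' := fun r X => Matrix.smul_mulVec r X v }
  have h1 : exp ((s : ℂ) • M) = Complex.exp ((s : ℂ) * lam) • exp ((s : ℂ) • N) := by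
    have hsplit : (s : ℂ) • M = (s : ℂ) • (lam • (1 : Matrix (Fin m) (Fin m) ℂ))
        + (s : ℂ) • N := by
      rw [← smul_add]; congr 1; simp [hN]
    have hcomm : Commute ((s : ℂ) • (lam • (1 : Matrix (Fin m) (Fin m) ℂ))) ((s : ℂ) • N) :=
      (((Commute.one_left N).smul_left lam).smul_left (s : ℂ)).smul_right (s : ℂ)
    rw [hsplit, Matrix.exp_add_of_commute _ _ hcomm]
    have halg : (s : ℂ) • (lam • (1 : Matrix (Fin m) (Fin m) ℂ))
        = algebraMap ℂ (Matrix (Fin m) (Fin m) ℂ) ((s : ℂ) * lam) := by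
      rw [smul_smul, Algebra.algebraMap_eq_smul_one]
    erw [halg, ← algebraMap_exp_comm, ← Algebra.smul_def, Complex.exp_eq_exp_ℂ]
  have h2 : (exp ((s : ℂ) • N)).mulVec v
      = ∑ n ∈ Finset.range k, ((s : ℂ) ^ n * (n ! : ℂ)⁻¹) • (N ^ n).mulVec v := by
    have hsum : Summable fun n : ℕ => ((n ! : ℂ))⁻¹ • ((s : ℂ) • N) ^ n :=
      expSeries_summable' (𝕂 := ℂ) ((s : ℂ) • N)
    have hterm : ∀ n : ℕ, L (((n ! : ℂ))⁻¹ • ((s : ℂ) • N) ^ n)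
        = ((s : ℂ) ^ n * (n ! : ℂ)⁻¹) • (N ^ n).mulVec v := by
      intro n
      have hp : ((s : ℂ) • N) ^ n = (s : ℂ) ^ n • N ^ n := smul_pow _ _ _
      show ((((n ! : ℂ))⁻¹ • ((s : ℂ) • N) ^ n)).mulVec v
          = ((s : ℂ) ^ n * (n ! : ℂ)⁻¹) • (N ^ n).mulVec v
      rw [hp, Matrix.smul_mulVec, Matrix.smul_mulVec, smul_smul, mul_comm]
    calc (exp ((s : ℂ) • N)).mulVec v
        = L (∑' n : ℕ, ((n ! : ℂ))⁻¹ • ((s : ℂ) • N) ^ n) := by rw [exp_eq_tsum ℂ]; rfl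
      _ = ∑' n : ℕ, L (((n ! : ℂ))⁻¹ • ((s : ℂ) • N) ^ n) :=
          L.toContinuousLinearMap.map_tsum hsum
      _ = ∑ n ∈ Finset.range k, L (((n ! : ℂ))⁻¹ • ((s : ℂ) • N) ^ n) := by
          refine tsum_eq_sum ?_
          intro n hn
          have hkn : k ≤ n := by simpa using hn
          have hNn : (N ^ n).mulVec v = 0 := by
            have : N ^ n = N ^ (n - k) * N ^ k := by
              rw [← pow_add]; congr 1; omega
            rw [this, ← Matrix.mulVec_mulVec, hv, Matrix.mulVec_zero]
          rw [hterm n, hNn, smul_zero]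
      _ = ∑ n ∈ Finset.range k, ((s : ℂ) ^ n * (n ! : ℂ)⁻¹) • (N ^ n).mulVec v := by
          exact Finset.sum_congr rfl fun n _ => hterm n
  rw [h1, Matrix.smul_mulVec, norm_smul, h2]
  have hnorme : ‖Complex.exp ((s : ℂ) * lam)‖ = Real.exp (s * lam.re) := by
    rw [Complex.norm_exp]
    congr 1
    simp [Complex.mul_re]
  rw [hnorme]
  calc Real.exp (s * lam.re) * ‖∑ n ∈ Finset.range k,
        ((s : ℂ) ^ n * (n ! : ℂ)⁻¹) • (N ^ n).mulVec v‖
      ≤ Real.exp (s * lam.re) * ∑ n ∈ Finset.range k,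
        (s ^ n * ((n ! : ℝ))⁻¹) * ‖(N ^ n).mulVec v‖ := by
        gcongr
        refine (norm_sum_le _ _).trans ?_
        refine Finset.sum_le_sum fun n _ => ?_
        rw [norm_smul]
        gcongr
        rw [norm_mul, norm_pow, norm_inv]
        simp [Complex.norm_real, abs_of_nonneg hs, Complex.norm_natCast]
    _ ≤ Real.exp (s * lam.re) * ∑ n ∈ Finset.range k,
        (Real.exp (ε * s) * ε⁻¹ ^ n) * ‖(N ^ n).mulVec v‖ := by
        refine mul_le_mul_of_nonneg_left (Finset.sum_le_sum fun n _ => ?_) (Real.exp_nonneg _)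
        refine mul_le_mul_of_nonneg_right ?_ (norm_nonneg _)
        have h4 : (ε * s) ^ n / (n ! : ℝ) ≤ Real.exp (ε * s) := by
          refine le_trans ?_ (Real.sum_le_exp_of_nonneg (by positivity) (n + 1))
          exact Finset.single_le_sum (f := fun i => (ε * s) ^ i / (i ! : ℝ))
            (fun i _ => by positivity) (Finset.self_mem_range_succ n)
        have h5 : s ^ n * ((n ! : ℝ))⁻¹ = ((ε * s) ^ n / (n ! : ℝ)) * ε⁻¹ ^ n := by
          rw [mul_pow]
          field_simp
          rw [mul_assoc, ← mul_pow, one_div, mul_inv_cancel₀ hε0.ne', one_pow, mul_one]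
        rw [h5]
        exact mul_le_mul_of_nonneg_right h4 (by positivity)
    _ = (∑ n ∈ Finset.range k, ε⁻¹ ^ n * ‖(N ^ n).mulVec v‖) * Real.exp (c * s) := by
        have hrw : ∀ n : ℕ, (Real.exp (ε * s) * ε⁻¹ ^ n) * ‖(N ^ n).mulVec v‖
            = Real.exp (ε * s) * (ε⁻¹ ^ n * ‖(N ^ n).mulVec v‖) := fun n => by ring
        simp_rw [hrw]
        rw [← Finset.mul_sum, ← mul_assoc, ← Real.exp_add]
        have hexp : s * lam.re + ε * s = c * s := by rw [hε]; ring
        rw [hexp, mul_comm]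

/-- Bound for `exp (s • M)` applied to any vector. -/
lemma col_bound (M : Matrix (Fin m) (Fin m) ℂ) {c : ℝ}
    (h : ∀ z ∈ spectrum ℂ M, z.re < c) (v : Fin m → ℂ) :
    ∃ C : ℝ, 0 ≤ C ∧ ∀ s : ℝ, 0 ≤ s →
      ‖(exp ((s : ℂ) • M)).mulVec v‖ ≤ C * Real.exp (c * s) := by
  classical
  set T : Module.End ℂ (Fin m → ℂ) := Matrix.toLinAlgEquiv' M with hT
  have htop : ⨆ μ : ℂ, T.maxGenEigenspace μ = ⊤ :=
    Module.End.iSup_maxGenEigenspace_eq_top T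
  have hv : v ∈ ⨆ μ : ℂ, T.maxGenEigenspace μ := htop ▸ Submodule.mem_top
  obtain ⟨f, hf, hsum⟩ := (Submodule.mem_iSup_iff_exists_finsupp _ v).mp hv
  have key : ∀ μ : ℂ, ∃ C : ℝ, 0 ≤ C ∧ ∀ s : ℝ, 0 ≤ s →
      ‖(exp ((s : ℂ) • M)).mulVec (f μ)‖ ≤ C * Real.exp (c * s) := by
    intro μ
    by_cases h0 : f μ = 0
    · exact ⟨0, le_rfl, fun s _ => by simp [h0, Matrix.mulVec_zero]⟩
    · obtain ⟨k, hk⟩ := (Module.End.mem_maxGenEigenspace T μ (f μ)).mp (hf μ)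
      have hkmat : ((M - μ • 1) ^ k).mulVec (f μ) = 0 := by
        have hTk : (T - μ • 1) ^ k = Matrix.toLinAlgEquiv' ((M - μ • 1) ^ k) := by
          rw [map_pow, map_sub, hT]
          congr 1
          rw [_root_.map_smul, map_one]
        rw [hTk] at hk
        rw [← Matrix.toLinAlgEquiv'_apply]
        exact hk
      have hspec : μ ∈ spectrum ℂ M := by
        have hgen : T.HasGenEigenvalue μ k := by
          rw [Module.End.hasGenEigenvalue_iff]
          rw [Submodule.ne_bot_iff]
          exact ⟨f μ, Module.End.mem_genEigenspace_nat.mpr hk, h0⟩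
        have heig : T.HasEigenvalue μ := Module.End.hasEigenvalue_of_hasGenEigenvalue hgen
        have := Module.End.hasEigenvalue_iff_mem_spectrum.mp heig
        rwa [hT, AlgEquiv.spectrum_eq] at this
      exact vec_bound M (h μ hspec) (f μ) k hkmat
  choose C hC0 hCb using key
  refine ⟨∑ μ ∈ f.support, C μ, Finset.sum_nonneg fun μ _ => hC0 μ, ?_⟩
  intro s hs
  have hdecomp : (exp ((s : ℂ) • M)).mulVec v
      = ∑ μ ∈ f.support, (exp ((s : ℂ) • M)).mulVec (f μ) := by
    conv_lhs => rw [← hsum]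
    rw [Finsupp.sum]
    rw [show (exp ((s : ℂ) • M)).mulVec (∑ μ ∈ f.support, f μ)
        = (exp ((s : ℂ) • M)).mulVecLin (∑ μ ∈ f.support, f μ) from rfl]
    rw [map_sum]
    rfl
  rw [hdecomp]
  calc ‖∑ μ ∈ f.support, (exp ((s : ℂ) • M)).mulVec (f μ)‖
      ≤ ∑ μ ∈ f.support, ‖(exp ((s : ℂ) • M)).mulVec (f μ)‖ := norm_sum_le _ _
    _ ≤ ∑ μ ∈ f.support, C μ * Real.exp (c * s) :=
        Finset.sum_le_sum fun μ _ => hCb μ s hs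
    _ = (∑ μ ∈ f.support, C μ) * Real.exp (c * s) := by rw [Finset.sum_mul]

/-- The `linftyOp` norm is bounded by the sum of sup-norms of the columns. -/
lemma norm_le_sum_cols (A : Matrix (Fin m) (Fin m) ℂ) :
    ‖A‖ ≤ ∑ j : Fin m, ‖A.mulVec (Pi.single j 1)‖ := by
  have hnn : ‖A‖₊ ≤ ∑ j : Fin m, ‖A.mulVec (Pi.single j 1)‖₊ := by
    rw [Matrix.linfty_opNNNorm_def]
    refine Finset.sup_le fun i _ => ?_
    refine Finset.sum_le_sum fun j _ => ?_
    have h1 : ‖(A.mulVec (Pi.single j 1)) i‖₊ ≤ ‖A.mulVec (Pi.single j 1)‖₊ :=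
      nnnorm_le_pi_nnnorm _ i
    simpa [Matrix.mulVec_single] using h1
  have := NNReal.coe_le_coe.mpr hnn
  simpa using this

/-- Exponential decay of `exp (s • M)` when the spectrum lies in `re < c`. -/
lemma exp_norm_bound (M : Matrix (Fin m) (Fin m) ℂ) {c : ℝ}
    (h : ∀ z ∈ spectrum ℂ M, z.re < c) :
    ∃ C : ℝ, 0 ≤ C ∧ ∀ s : ℝ, 0 ≤ s →
      ‖exp ((s : ℂ) • M)‖ ≤ C * Real.exp (c * s) := by
  choose C hC0 hCb using fun j : Fin m => col_bound M h (Pi.single j 1)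
  refine ⟨∑ j : Fin m, C j, Finset.sum_nonneg fun j _ => hC0 j, fun s hs => ?_⟩
  calc ‖exp ((s : ℂ) • M)‖
      ≤ ∑ j : Fin m, ‖(exp ((s : ℂ) • M)).mulVec (Pi.single j 1)‖ :=
        norm_le_sum_cols _
    _ ≤ ∑ j : Fin m, C j * Real.exp (c * s) := Finset.sum_le_sum fun j _ => hCb j s hs
    _ = (∑ j : Fin m, C j) * Real.exp (c * s) := by rw [Finset.sum_mul]

end SylvesterAux
/-- If the spectra of `Ap` and `Am` are separated by the line
`{ζ : Re (α ζ) = β}`, with `Re (α λ) > β` on `spec Ap` and `Re (α μ) < β` on `spec Am`, then for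
every `B` the function `s ↦ exp (-s α Ap) * B * exp (s α Am)` is integrable on `[0,∞)` and
`X = α • ∫₀^∞ exp (-s α Ap) * B * exp (s α Am) ds` solves `Ap X - X Am = B`. -/
theorem sylvester_solution_ray_integral {m : ℕ} (Ap Am B : Matrix (Fin m) (Fin m) ℂ)
    (α : ℂ) (hα : α ≠ 0) (β : ℝ)
    (hAp : ∀ lam ∈ spectrum ℂ Ap, β < (α * lam).re)
    (hAm : ∀ mu ∈ spectrum ℂ Am, (α * mu).re < β) :
    @IntegrableOn _ _ _ _ SeminormedAddGroup.toContinuousENorm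
      (fun s : ℝ => exp ((-((s : ℂ) * α)) • Ap) * B * exp (((s : ℂ) * α) • Am))
      (Set.Ici 0) volume ∧
    Ap * (α • ∫ s in Set.Ici (0:ℝ),
        exp ((-((s : ℂ) * α)) • Ap) * B * exp (((s : ℂ) * α) • Am))
      - (α • ∫ s in Set.Ici (0:ℝ),
        exp ((-((s : ℂ) * α)) • Ap) * B * exp (((s : ℂ) * α) • Am)) * Am = B := by
  classical
  rcases Nat.eq_zero_or_pos m with hm | hm
  · subst hm
    haveI : Subsingleton (Matrix (Fin 0) (Fin 0) ℂ) := ⟨fun A B => by ext i j; exact i.elim0⟩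
    constructor
    · have hz : (fun s : ℝ => exp ((-((s : ℂ) * α)) • Ap) * B * exp (((s : ℂ) * α) • Am))
          = fun _ : ℝ => (0 : Matrix (Fin 0) (Fin 0) ℂ) := funext fun s => Subsingleton.elim _ _
      rw [hz]
      exact integrableOn_zero
    · exact Subsingleton.elim _ _
  have i0 : Fin m := ⟨0, hm⟩
  haveI : Nonempty (Fin m) := ⟨i0⟩
  haveI : Nontrivial (Matrix (Fin m) (Fin m) ℂ) := by
    refine nontrivial_of_ne 1 0 fun hcon => ?_
    have := congrFun (congrFun hcon i0) i0
    simp [Matrix.one_apply] at this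
  set M1 : Matrix (Fin m) (Fin m) ℂ := (-α) • Ap with hM1
  set M2 : Matrix (Fin m) (Fin m) ℂ := α • Am with hM2
  -- spectral bounds
  have hspec1 : ∀ z ∈ spectrum ℂ M1, z.re < -β := by
    intro z hz
    have hu1 : spectrum ℂ M1 = (Units.mk0 (-α) (neg_ne_zero.mpr hα)) • spectrum ℂ Ap := by
      rw [← spectrum.unit_smul_eq_smul]
      congr 1
    rw [hu1] at hz
    obtain ⟨lam, hlam, rfl⟩ := hz
    have h1 := hAp lam hlam
    simp only [Units.smul_def, smul_eq_mul, Units.val_mk0, neg_mul, Complex.neg_re]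
    linarith
  have hspec2 : ∀ z ∈ spectrum ℂ M2, z.re < β := by
    intro z hz
    have hu2 : spectrum ℂ M2 = (Units.mk0 α hα) • spectrum ℂ Am := by
      rw [← spectrum.unit_smul_eq_smul]
      congr 1
    rw [hu2] at hz
    obtain ⟨mu, hmu, rfl⟩ := hz
    have h1 := hAm mu hmu
    simp only [Units.smul_def, smul_eq_mul, Units.val_mk0]
    linarith
  -- greatest real parts
  obtain ⟨γ1, hγ1mem, hγ1ub⟩ :=
    ((spectrum.isCompact M1).image Complex.continuous_re).exists_isGreatest
      ((spectrum.nonempty M1).image _)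
  obtain ⟨γ2, hγ2mem, hγ2ub⟩ :=
    ((spectrum.isCompact M2).image Complex.continuous_re).exists_isGreatest
      ((spectrum.nonempty M2).image _)
  have hγ1 : γ1 < -β := by
    obtain ⟨z, hz, rfl⟩ := hγ1mem
    exact hspec1 z hz
  have hγ2 : γ2 < β := by
    obtain ⟨z, hz, rfl⟩ := hγ2mem
    exact hspec2 z hz
  have hγsum : γ1 + γ2 < 0 := by linarith
  set δ : ℝ := -(γ1 + γ2) / 4 with hδ
  have hδ0 : 0 < δ := by simp only [hδ]; linarith
  set c1 : ℝ := γ1 + δ with hc1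
  set c2 : ℝ := γ2 + δ with hc2
  have hcsum : c1 + c2 < 0 := by simp only [hc1, hc2, hδ]; linarith
  have hb1 : ∀ z ∈ spectrum ℂ M1, z.re < c1 := fun z hz =>
    lt_of_le_of_lt (hγ1ub (Set.mem_image_of_mem _ hz)) (by simp only [hc1]; linarith)
  have hb2 : ∀ z ∈ spectrum ℂ M2, z.re < c2 := fun z hz =>
    lt_of_le_of_lt (hγ2ub (Set.mem_image_of_mem _ hz)) (by simp only [hc2]; linarith)
  clear_value δ c1 c2
  obtain ⟨C1, hC10, hC1⟩ := SylvesterAux.exp_norm_bound M1 hb1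
  obtain ⟨C2, hC20, hC2⟩ := SylvesterAux.exp_norm_bound M2 hb2
  -- the integrand
  set E : ℝ → Matrix (Fin m) (Fin m) ℂ :=
    fun s => exp ((s : ℂ) • M1) * B * exp ((s : ℂ) • M2) with hE
  have hEq : (fun s : ℝ => exp ((-((s : ℂ) * α)) • Ap) * B * exp (((s : ℂ) * α) • Am))
      = E := by
    funext s
    rw [show (-((s : ℂ) * α)) • Ap = (s : ℂ) • M1 by rw [hM1, smul_smul, mul_neg],
      show ((s : ℂ) * α) • Am = (s : ℂ) • M2 by rw [hM2, smul_smul]]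
  -- derivative
  have hderiv : ∀ s : ℝ, HasDerivAt E (M1 * E s + E s * M2) s := by
    intro s
    have h1 : HasDerivAt (fun z : ℂ => exp (z • M1) * B)
        (M1 * exp ((s : ℂ) • M1) * B) (s : ℂ) :=
      (hasDerivAt_exp_smul_const' (𝕂 := ℂ) M1 (s : ℂ)).mul_const B
    have h2 : HasDerivAt (fun z : ℂ => exp (z • M2))
        (exp ((s : ℂ) • M2) * M2) (s : ℂ) :=
      hasDerivAt_exp_smul_const (𝕂 := ℂ) M2 (s : ℂ)
    have h3 := h1.mul h2
    have h4 : HasDerivAt (fun y : ℝ => (y : ℂ)) 1 s := by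
      exact Complex.ofRealCLM.hasDerivAt (x := s)
    have h5 := h3.scomp s h4
    simp only [one_smul] at h5
    have h6 : M1 * E s + E s * M2 = M1 * exp ((s : ℂ) • M1) * B * exp ((s : ℂ) • M2)
        + exp ((s : ℂ) • M1) * B * (exp ((s : ℂ) • M2) * M2) := by
      simp only [hE, mul_assoc]
    rw [h6]
    exact h5
  have hEcont : Continuous E := continuous_iff_continuousAt.mpr fun s => (hderiv s).continuousAt
  set K : ℝ := C1 * ‖B‖ * C2 with hK
  clear_value K
  have hbound : ∀ s : ℝ, 0 ≤ s → ‖E s‖ ≤ K * Real.exp ((c1 + c2) * s) := by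
    intro s hs
    calc ‖E s‖ ≤ ‖exp ((s : ℂ) • M1)‖ * ‖B‖ * ‖exp ((s : ℂ) • M2)‖ := by
          refine (norm_mul_le _ _).trans ?_
          exact mul_le_mul_of_nonneg_right (norm_mul_le _ _) (norm_nonneg _)
      _ ≤ (C1 * Real.exp (c1 * s)) * ‖B‖ * (C2 * Real.exp (c2 * s)) := by
          have b1 := hC1 s hs
          have b2 := hC2 s hs
          gcongr
      _ = K * Real.exp ((c1 + c2) * s) := by
          rw [hK, add_mul, Real.exp_add]; ring
  have hgint : IntegrableOn (fun s : ℝ => K * Real.exp ((c1 + c2) * s)) (Set.Ici 0) := by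
    rw [integrableOn_Ici_iff_integrableOn_Ioi]
    have h := exp_neg_integrableOn_Ioi (0 : ℝ) (show (0:ℝ) < -(c1 + c2) by linarith)
    have := h.const_mul K
    simp only [neg_neg] at this
    exact this
  haveI : TopologicalSpace.PseudoMetrizableSpace (Matrix (Fin m) (Fin m) ℂ) :=
    inferInstanceAs (TopologicalSpace.PseudoMetrizableSpace (Fin m → Fin m → ℂ))
  have hEint : @IntegrableOn _ _ _ _ SeminormedAddGroup.toContinuousENorm E (Set.Ici 0) volume := by
    refine Integrable.mono' hgint hEcont.aestronglyMeasurable ?_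
    rw [ae_restrict_iff' measurableSet_Ici]
    exact Filter.Eventually.of_forall fun s hs => hbound s hs
  have htend : Filter.Tendsto E Filter.atTop (nhds 0) := by
    have h1 : Filter.Tendsto (fun s : ℝ => (c1 + c2) * s) Filter.atTop Filter.atBot :=
      Filter.Tendsto.const_mul_atTop_of_neg hcsum Filter.tendsto_id
    have h2 : Filter.Tendsto (fun s : ℝ => K * Real.exp ((c1 + c2) * s))
        Filter.atTop (nhds 0) := by
      have := (Real.tendsto_exp_atBot.comp h1).const_mul K
      simpa using this
    exact squeeze_zero_norm' ((Filter.eventually_ge_atTop (0:ℝ)).mono fun s hs => hbound s hs) h2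
  have hint1 : @IntegrableOn _ _ _ _ SeminormedAddGroup.toContinuousENorm (fun s : ℝ => Ap * E s) (Set.Ici 0) volume :=
    (ContinuousLinearMap.mul ℂ (Matrix (Fin m) (Fin m) ℂ) Ap).integrable_comp hEint
  have hint2 : @IntegrableOn _ _ _ _ SeminormedAddGroup.toContinuousENorm (fun s : ℝ => E s * Am) (Set.Ici 0) volume :=
    (((ContinuousLinearMap.mul ℂ (Matrix (Fin m) (Fin m) ℂ)).flip Am)).integrable_comp hEint
  have hE'int : @IntegrableOn _ _ _ _ SeminormedAddGroup.toContinuousENorm (fun s : ℝ => M1 * E s + E s * M2) (Set.Ioi 0) volume := by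
    have hl := (ContinuousLinearMap.mul ℂ (Matrix (Fin m) (Fin m) ℂ) M1).integrable_comp
      (hEint.mono_set Set.Ioi_subset_Ici_self)
    have hr := (((ContinuousLinearMap.mul ℂ (Matrix (Fin m) (Fin m) ℂ)).flip M2)).integrable_comp
      (hEint.mono_set Set.Ioi_subset_Ici_self)
    exact hl.add hr
  have hFTC : ∫ s in Set.Ioi (0:ℝ), (M1 * E s + E s * M2) = 0 - E 0 :=
    integral_Ioi_of_hasDerivAt_of_tendsto' (fun x _ => hderiv x) hE'int htend
  have hE0 : E 0 = B := by simp [hE]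
  constructor
  · rw [hEq]; exact hEint
  · rw [hEq]
    have hApI : Ap * ∫ s in Set.Ici (0:ℝ), E s = ∫ s in Set.Ici (0:ℝ), Ap * E s :=
      ((ContinuousLinearMap.mul ℂ (Matrix (Fin m) (Fin m) ℂ) Ap).integral_comp_comm hEint).symm
    have hIAm : (∫ s in Set.Ici (0:ℝ), E s) * Am = ∫ s in Set.Ici (0:ℝ), E s * Am :=
      ((((ContinuousLinearMap.mul ℂ (Matrix (Fin m) (Fin m) ℂ)).flip Am)).integral_comp_comm
        hEint).symm
    have hptw : ∀ s : ℝ, Ap * E s - E s * Am = -(α⁻¹ • (M1 * E s + E s * M2)) := by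
      intro s
      rw [hM1, hM2, smul_mul_assoc, mul_smul_comm, smul_add, smul_smul, smul_smul,
        show α⁻¹ * -α = -1 by field_simp, inv_mul_cancel₀ hα, neg_smul, one_smul, one_smul,
        neg_add, neg_neg, ← sub_eq_add_neg]
    have hkey : Ap * (∫ s in Set.Ici (0:ℝ), E s) - (∫ s in Set.Ici (0:ℝ), E s) * Am
        = α⁻¹ • B := by
      rw [hApI, hIAm, ← integral_sub hint1 hint2]
      have : ∫ s in Set.Ici (0:ℝ), (Ap * E s - E s * Am)
          = ∫ s in Set.Ici (0:ℝ), -(α⁻¹ • (M1 * E s + E s * M2)) := by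
        exact integral_congr_ae (Filter.Eventually.of_forall fun s => hptw s)
      rw [this, integral_neg, integral_smul, integral_Ici_eq_integral_Ioi, hFTC, hE0,
        zero_sub, smul_neg, neg_neg]
    calc Ap * (α • ∫ s in Set.Ici (0:ℝ), E s) - (α • ∫ s in Set.Ici (0:ℝ), E s) * Am
        = α • (Ap * (∫ s in Set.Ici (0:ℝ), E s) - (∫ s in Set.Ici (0:ℝ), E s) * Am) := by
          rw [mul_smul_comm, smul_mul_assoc, smul_sub]
      _ = α • (α⁻¹ • B) := by rw [hkey]
      _ = B := by rw [smul_smul, mul_inv_cancel₀ hα, one_smul]
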